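/- The undirected open-optional normal self-closing door can simulate the directed open-optional normal self-closing door. In particular, two undirected open-optional normal self-closing doors wired in series (each door's opening port accessible only from the entering side, as in the construction) simulate a diode, and wiring a diode to each side of the self-closing tunnel makes that tunnel directed. -/

import Mathlib

/-- A 1-player gadget: a finite set of states, a finite set of locations,
and a set of traversals between state–location pairs. -/
structure Gadget where
  State : Type
  Loc : Type
  stateFin : Fintype State
  locFin : Fintype Loc
  trav : (State × Loc) → (State × Loc) → Prop

open Classical in
/-- Update the state of one gadget instance in a global state. -/
noncomputable def updState {ι St : Type} (σg : ι → St) (i : ι) (s : St) : ι → St :=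
  fun j => if j = i then s else σg j

/-- A system of copies of the gadget `G`: a finite collection of instances together with
symmetric connections (pairings of locations) along which the agent moves freely. -/
structure System (G : Gadget) where
  ι : Type
  instFin : Fintype ι
  conn : (ι × G.Loc) → (ι × G.Loc) → Prop
  conn_symm : ∀ x y, conn x y → conn y x

/-- A single move of the agent in a system: a traversal inside one instance
(changing only that instance's state), or a free move along a connection. -/
inductive SysStep (G : Gadget) (S : System G) :
    ((S.ι → G.State) × (S.ι × G.Loc)) → ((S.ι → G.State) × (S.ι × G.Loc)) → Prop
  | trav {σg : S.ι → G.State} {i : S.ι} {a b : G.Loc} {s' : G.State} :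
      G.trav (σg i, a) (s', b) →
      SysStep G S (σg, (i, a)) (updState σg i s', (i, b))
  | move {σg : S.ι → G.State} {x y : S.ι × G.Loc} :
      S.conn x y → SysStep G S (σg, x) (σg, y)

/-- `Simulates G' G` : there is a system of copies of `G'`, with external locations
identified (injectively) with the locations of `G` and an injective encoding of the
states of `G` as global states, whose reachability behavior between external locations
in encoded global states is exactly the transitive closure of `G`. -/
def Simulates (G' G : Gadget) : Prop :=
  ∃ S : System G', ∃ ext : G.Loc → S.ι × G'.Loc, ∃ enc : G.State → (S.ι → G'.State),
    Function.Injective ext ∧ Function.Injective enc ∧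
    ∀ s s' a b,
      Relation.ReflTransGen (SysStep G' S) (enc s, ext a) (enc s', ext b) ↔
      Relation.ReflTransGen G.trav (s, a) (s', b)

/-! ### Doors.  State `true` = open, `false` = closed.
A direction flag `true` means the corresponding tunnel is directed,
`false` that it is undirected. -/

/-- Locations of a door with an opening tunnel: entrance/exit of the opening (`O`),
traverse (`T`) and closing (`C`) tunnels. -/
inductive DoorLoc | O0 | O1 | T0 | T1 | C0 | C1
deriving DecidableEq

instance : Fintype DoorLoc :=
  ⟨{DoorLoc.O0, DoorLoc.O1, DoorLoc.T0, DoorLoc.T1, DoorLoc.C0, DoorLoc.C1}, fun x => by cases x <;> simp⟩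

/-- Traversals of a door with an opening tunnel; `dO`, `dT`, `dC` record whether the
opening, traverse, closing tunnels are directed. -/
def doorTrav (dO dT dC : Bool) : (Bool × DoorLoc) → (Bool × DoorLoc) → Prop := fun x y =>
  (x.2 = DoorLoc.O0 ∧ y = (true, DoorLoc.O1)) ∨
  (dO = false ∧ x.2 = DoorLoc.O1 ∧ y = (true, DoorLoc.O0)) ∨
  (x.1 = true ∧ x.2 = DoorLoc.T0 ∧ y = (true, DoorLoc.T1)) ∨
  (dT = false ∧ x.1 = true ∧ x.2 = DoorLoc.T1 ∧ y = (true, DoorLoc.T0)) ∨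
  (x.2 = DoorLoc.C0 ∧ y = (false, DoorLoc.C1)) ∨
  (dC = false ∧ x.2 = DoorLoc.C1 ∧ y = (false, DoorLoc.C0))

/-- The door with an opening tunnel (an open-required door). -/
def doorGadget (dO dT dC : Bool) : Gadget :=
  ⟨Bool, DoorLoc, inferInstance, inferInstance, doorTrav dO dT dC⟩

/-- Locations of an open-optional door: opening port `O` plus traverse and closing tunnels. -/
inductive ODoorLoc | O | T0 | T1 | C0 | C1
deriving DecidableEq

instance : Fintype ODoorLoc :=
  ⟨{ODoorLoc.O, ODoorLoc.T0, ODoorLoc.T1, ODoorLoc.C0, ODoorLoc.C1}, fun x => by cases x <;> simp⟩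

/-- Traversals of an open-optional door: a visit to the opening port `O` sets the state
to open; `dT`, `dC` record whether the traverse and closing tunnels are directed. -/
def openOptDoorTrav (dT dC : Bool) : (Bool × ODoorLoc) → (Bool × ODoorLoc) → Prop := fun x y =>
  (x.2 = ODoorLoc.O ∧ y = (true, ODoorLoc.O)) ∨
  (x.1 = true ∧ x.2 = ODoorLoc.T0 ∧ y = (true, ODoorLoc.T1)) ∨
  (dT = false ∧ x.1 = true ∧ x.2 = ODoorLoc.T1 ∧ y = (true, ODoorLoc.T0)) ∨
  (x.2 = ODoorLoc.C0 ∧ y = (false, ODoorLoc.C1)) ∨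
  (dC = false ∧ x.2 = ODoorLoc.C1 ∧ y = (false, ODoorLoc.C0))

/-- The open-optional door. -/
def openOptDoorGadget (dT dC : Bool) : Gadget :=
  ⟨Bool, ODoorLoc, inferInstance, inferInstance, openOptDoorTrav dT dC⟩

/-- A diode: a 1-state gadget with one always-traversable directed tunnel. -/
inductive DiodeLoc | inp | out
deriving DecidableEq

instance : Fintype DiodeLoc :=
  ⟨{DiodeLoc.inp, DiodeLoc.out}, fun x => by cases x <;> simp⟩

def diode : Gadget :=
  ⟨Unit, DiodeLoc, inferInstance, inferInstance,
    fun x y => x.2 = DiodeLoc.inp ∧ y.2 = DiodeLoc.out⟩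

/-- Locations of an open-required normal self-closing door. -/
inductive SCDLoc | O0 | O1 | T0 | T1
deriving DecidableEq

instance : Fintype SCDLoc :=
  ⟨{SCDLoc.O0, SCDLoc.O1, SCDLoc.T0, SCDLoc.T1}, fun x => by cases x <;> simp⟩

/-- Open-required normal self-closing door: opening tunnel `O` (always traversable, sets
the state to open), self-closing tunnel `T` (traversable exactly when open, sets closed). -/
def nSCDTrav (dO dT : Bool) : (Bool × SCDLoc) → (Bool × SCDLoc) → Prop := fun x y =>
  (x.2 = SCDLoc.O0 ∧ y = (true, SCDLoc.O1)) ∨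
  (dO = false ∧ x.2 = SCDLoc.O1 ∧ y = (true, SCDLoc.O0)) ∨
  (x.1 = true ∧ x.2 = SCDLoc.T0 ∧ y = (false, SCDLoc.T1)) ∨
  (dT = false ∧ x.1 = true ∧ x.2 = SCDLoc.T1 ∧ y = (false, SCDLoc.T0))

def nSCD (dO dT : Bool) : Gadget :=
  ⟨Bool, SCDLoc, inferInstance, inferInstance, nSCDTrav dO dT⟩

/-- Locations of an open-optional normal self-closing door. -/
inductive OOSCDLoc | O | T0 | T1
deriving DecidableEq

instance : Fintype OOSCDLoc :=
  ⟨{OOSCDLoc.O, OOSCDLoc.T0, OOSCDLoc.T1}, fun x => by cases x <;> simp⟩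

/-- Open-optional normal self-closing door: opening port `O` (visit sets the state to
open), self-closing tunnel `T` (traversable exactly when open, sets the state closed). -/
def ooSCDTrav (dT : Bool) : (Bool × OOSCDLoc) → (Bool × OOSCDLoc) → Prop := fun x y =>
  (x.2 = OOSCDLoc.O ∧ y = (true, OOSCDLoc.O)) ∨
  (x.1 = true ∧ x.2 = OOSCDLoc.T0 ∧ y = (false, OOSCDLoc.T1)) ∨
  (dT = false ∧ x.1 = true ∧ x.2 = OOSCDLoc.T1 ∧ y = (false, OOSCDLoc.T0))

def ooSCD (dT : Bool) : Gadget :=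
  ⟨Bool, OOSCDLoc, inferInstance, inferInstance, ooSCDTrav dT⟩

/-- Locations of a symmetric self-closing door. -/
inductive SymSCDLoc | A0 | A1 | B0 | B1
deriving DecidableEq

instance : Fintype SymSCDLoc :=
  ⟨{SymSCDLoc.A0, SymSCDLoc.A1, SymSCDLoc.B0, SymSCDLoc.B1}, fun x => by cases x <;> simp⟩

/-- Symmetric self-closing door: self-opening tunnel `A` (traversable exactly when closed,
sets the state open), self-closing tunnel `B` (traversable exactly when open, sets closed). -/
def symSCDTrav (dA dB : Bool) : (Bool × SymSCDLoc) → (Bool × SymSCDLoc) → Prop := fun x y =>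
  (x.1 = false ∧ x.2 = SymSCDLoc.A0 ∧ y = (true, SymSCDLoc.A1)) ∨
  (dA = false ∧ x.1 = false ∧ x.2 = SymSCDLoc.A1 ∧ y = (true, SymSCDLoc.A0)) ∨
  (x.1 = true ∧ x.2 = SymSCDLoc.B0 ∧ y = (false, SymSCDLoc.B1)) ∨
  (dB = false ∧ x.1 = true ∧ x.2 = SymSCDLoc.B1 ∧ y = (false, SymSCDLoc.B0))

def symSCD (dA dB : Bool) : Gadget :=
  ⟨Bool, SymSCDLoc, inferInstance, inferInstance, symSCDTrav dA dB⟩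


/-! ### Auxiliary development for Statement 7 -/

section Aux7

open OOSCDLoc DiodeLoc

instance aux_decOoTrav (d : Bool) (x y : Bool × OOSCDLoc) : Decidable (ooSCDTrav d x y) := by
  unfold ooSCDTrav; infer_instance

instance aux_decEqSt (d : Bool) : DecidableEq (ooSCD d).State := inferInstanceAs (DecidableEq Bool)

instance aux_decEqLoc (d : Bool) : DecidableEq (ooSCD d).Loc := inferInstanceAs (DecidableEq OOSCDLoc)

instance aux_decOoTrav' (d : Bool) (x y : (ooSCD d).State × (ooSCD d).Loc) :
    Decidable (ooSCDTrav d x y) := aux_decOoTrav d x y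

lemma aux_rtg_inv {α : Type*} {r : α → α → Prop} {P : α → Prop}
    (hP : ∀ x y, P x → r x y → P y) {a b : α}
    (h : Relation.ReflTransGen r a b) (ha : P a) : P b := by
  induction h with
  | refl => exact ha
  | tail _ h2 ih => exact hP _ _ ih h2

lemma aux_updState_def {ι St : Type} [DecidableEq ι] (σ : ι → St) (i : ι) (s : St) :
    updState σ i s = fun j => if j = i then s else σ j := by
  funext j
  unfold updState
  by_cases hj : j = i
  · rw [if_pos hj, if_pos hj]
  · rw [if_neg hj, if_neg hj]

lemma aux_stepTrav {G : Gadget} (S : System G) [DecidableEq S.ι]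
    {σ σ' : S.ι → G.State} {i : S.ι} {a b : G.Loc} (s' : G.State)
    (h : G.trav (σ i, a) (s', b)) (hσ : ∀ j, σ' j = if j = i then s' else σ j) :
    SysStep G S (σ, (i, a)) (σ', (i, b)) := by
  have e : σ' = updState σ i s' := by rw [aux_updState_def]; funext j; exact hσ j
  rw [e]
  exact SysStep.trav h

/-! #### Two doors in series simulate a diode -/

def aux_r2 : (Fin 2 × OOSCDLoc) → (Fin 2 × OOSCDLoc) → Prop := fun x y =>
  (x = (0, T0) ∧ y = (0, O)) ∨ (x = (0, T1) ∧ y = (1, O)) ∨ (x = (0, T1) ∧ y = (1, T0))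

instance (x y : Fin 2 × OOSCDLoc) : Decidable (aux_r2 x y) := by unfold aux_r2; infer_instance

def aux_conn2 : (Fin 2 × OOSCDLoc) → (Fin 2 × OOSCDLoc) → Prop := fun x y =>
  aux_r2 x y ∨ aux_r2 y x

instance (x y : Fin 2 × OOSCDLoc) : Decidable (aux_conn2 x y) := by unfold aux_conn2; infer_instance

abbrev aux_sys2 : System (ooSCD false) :=
  { ι := Fin 2
    instFin := inferInstance
    conn := aux_conn2
    conn_symm := fun _ _ h => Or.symm h }

instance (x : aux_sys2.ι × (ooSCD false).Loc) (y : aux_sys2.ι × (ooSCD false).Loc) : Decidable (aux_sys2.conn x y) :=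
  (inferInstance : ∀ x y : Fin 2 × OOSCDLoc, Decidable (aux_conn2 x y)) x y

instance (x : aux_sys2.ι × (ooSCD false).Loc) (y : Fin 2 × OOSCDLoc) : Decidable (aux_sys2.conn x y) :=
  (inferInstance : ∀ x y : Fin 2 × OOSCDLoc, Decidable (aux_conn2 x y)) x y

instance (x : Fin 2 × OOSCDLoc) (y : aux_sys2.ι × (ooSCD false).Loc) : Decidable (aux_sys2.conn x y) :=
  (inferInstance : ∀ x y : Fin 2 × OOSCDLoc, Decidable (aux_conn2 x y)) x y

instance (x : Fin 2 × OOSCDLoc) (y : Fin 2 × OOSCDLoc) : Decidable (aux_sys2.conn x y) :=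
  (inferInstance : ∀ x y : Fin 2 × OOSCDLoc, Decidable (aux_conn2 x y)) x y

instance : Fintype aux_sys2.ι := inferInstanceAs (Fintype (Fin 2))

instance : DecidableEq aux_sys2.ι := inferInstanceAs (DecidableEq (Fin 2))

def aux_ext2 : DiodeLoc → Fin 2 × OOSCDLoc := fun a =>
  match a with
  | .inp => (0, T0)
  | .out => (1, T1)

def aux_enc2 : Unit → Fin 2 → Bool := fun _ _ => false

def aux_Inv2 : DiodeLoc → ((Fin 2 → Bool) × (Fin 2 × OOSCDLoc)) → Prop := fun a c =>
  (a = DiodeLoc.inp ∧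
    (((c.2 = (0, T0) ∨ c.2 = (0, O)) ∧ c.1 1 = false) ∨
     ((c.2 = (0, T1) ∨ c.2 = (1, O) ∨ c.2 = (1, T0)) ∧ c.1 0 = false) ∨
     (c.2 = (1, T1) ∧ c.1 0 = false ∧ c.1 1 = false))) ∨
  (a = DiodeLoc.out ∧ c.2 = (1, T1) ∧ c.1 0 = false ∧ c.1 1 = false)

instance (a : DiodeLoc) (c : (Fin 2 → Bool) × (Fin 2 × OOSCDLoc)) : Decidable (aux_Inv2 a c) := by unfold aux_Inv2; infer_instance

lemma aux_inv2_trav : ∀ (a : DiodeLoc) (σ : Fin 2 → Bool) (i : Fin 2)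
    (l : OOSCDLoc) (t : Bool) (l' : OOSCDLoc),
    aux_Inv2 a (σ, (i, l)) → ooSCDTrav false (σ i, l) (t, l') →
    aux_Inv2 a ((fun j => if j = i then t else σ j), (i, l')) := by decide

lemma aux_inv2_move : ∀ (a : DiodeLoc) (σ : Fin 2 → Bool) (x y : Fin 2 × OOSCDLoc),
    aux_Inv2 a (σ, x) → aux_conn2 x y → aux_Inv2 a (σ, y) := by decide

lemma aux_inv2_closed (a : DiodeLoc) :
    ∀ c c', aux_Inv2 a c → SysStep (ooSCD false) aux_sys2 c c' → aux_Inv2 a c' := by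
  rintro ⟨σ, x⟩ ⟨σ', y⟩ h hs
  match hs with
  | .trav ht =>
      erw [aux_updState_def (ι := Fin 2) (St := Bool)]
      exact aux_inv2_trav _ _ _ _ _ _ h ht
  | .move hm => exact aux_inv2_move _ _ _ _ h hm

lemma aux_inv2_init : ∀ a : DiodeLoc, aux_Inv2 a (aux_enc2 (), aux_ext2 a) := by decide

def aux_Rd : (Unit × DiodeLoc) → (Unit × DiodeLoc) → Prop := fun x y =>
  x = y ∨ (x.2 = DiodeLoc.inp ∧ y.2 = DiodeLoc.out)

instance (x y : Unit × DiodeLoc) : Decidable (aux_Rd x y) := by unfold aux_Rd; infer_instance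

lemma aux_inv2_ext : ∀ (a b : DiodeLoc),
    aux_Inv2 a (aux_enc2 (), aux_ext2 b) → aux_Rd ((), a) ((), b) := by decide

lemma aux_rd_step : ∀ (x u v : Unit × DiodeLoc),
    aux_Rd x u → (u.2 = DiodeLoc.inp ∧ v.2 = DiodeLoc.out) → aux_Rd x v := by decide

lemma aux_rd_char (x y : Unit × DiodeLoc) :
    Relation.ReflTransGen diode.trav x y ↔ aux_Rd x y := by
  constructor
  · intro h
    exact aux_rtg_inv (fun u v hu huv => aux_rd_step x u v hu huv) h (Or.inl rfl)
  · rintro (rfl | ⟨h1, h2⟩)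
    · exact .refl
    · exact .single ⟨h1, h2⟩

lemma aux_path2 :
    Relation.ReflTransGen (SysStep (ooSCD false) aux_sys2)
      (aux_enc2 (), ((0 : Fin 2), T0)) (aux_enc2 (), ((1 : Fin 2), T1)) := by
  refine .head (b := (aux_enc2 (), ((0 : Fin 2), O))) (SysStep.move (by decide)) ?_
  refine .head (b := (![true, false], ((0 : Fin 2), O)))
    (aux_stepTrav aux_sys2 true (show ooSCDTrav false _ _ by decide) (by intro j; fin_cases j <;> rfl)) ?_
  refine .head (b := (![true, false], ((0 : Fin 2), T0))) (SysStep.move (by decide)) ?_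
  refine .head (b := (aux_enc2 (), ((0 : Fin 2), T1)))
    (aux_stepTrav aux_sys2 false (show ooSCDTrav false _ _ by decide) (by intro j; fin_cases j <;> rfl)) ?_
  refine .head (b := (aux_enc2 (), ((1 : Fin 2), O))) (SysStep.move (by decide)) ?_
  refine .head (b := (![false, true], ((1 : Fin 2), O)))
    (aux_stepTrav aux_sys2 true (show ooSCDTrav false _ _ by decide) (by intro j; fin_cases j <;> rfl)) ?_
  refine .head (b := (![false, true], ((0 : Fin 2), T1))) (SysStep.move (by decide)) ?_
  refine .head (b := (![false, true], ((1 : Fin 2), T0))) (SysStep.move (by decide)) ?_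
  refine .head (b := (aux_enc2 (), ((1 : Fin 2), T1)))
    (aux_stepTrav aux_sys2 false (show ooSCDTrav false _ _ by decide) (by intro j; fin_cases j <;> rfl)) ?_
  exact .refl

lemma aux_sim_diode : Simulates (ooSCD false) diode := by
  refine ⟨aux_sys2, aux_ext2, aux_enc2, ?_, ?_, ?_⟩
  · intro a b h
    have h' : (aux_ext2 a : Fin 2 × OOSCDLoc) = aux_ext2 b := h
    clear h
    cases a <;> cases b <;> first | rfl | exact absurd h' (by decide)
  · intro a b _
    rfl
  · intro s s' a b
    constructor
    · intro h
      have hI := aux_rtg_inv (aux_inv2_closed a) h (aux_inv2_init a)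
      exact (aux_rd_char _ _).mpr (aux_inv2_ext a b hI)
    · intro h
      rcases (aux_rd_char _ _).mp h with heq | ⟨h1, h2⟩
      · injection heq with e1 e2
        subst e1; subst e2
        exact .refl
      · have h1' : a = DiodeLoc.inp := h1
        have h2' : b = DiodeLoc.out := h2
        subst h1'; subst h2'
        exact aux_path2

/-! #### Diode–door–diode simulates the directed open-optional SCD -/

def aux_r5 : (Fin 5 × OOSCDLoc) → (Fin 5 × OOSCDLoc) → Prop := fun x y =>
  (x = (0, T0) ∧ y = (0, O)) ∨
  (x = (0, T1) ∧ y = (1, O)) ∨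
  (x = (0, T1) ∧ y = (1, T0)) ∨
  (x = (1, T1) ∧ y = (2, T0)) ∨
  (x = (2, T1) ∧ y = (3, O)) ∨
  (x = (2, T1) ∧ y = (3, T0)) ∨
  (x = (3, T1) ∧ y = (4, O)) ∨
  (x = (3, T1) ∧ y = (4, T0))

instance (x y : Fin 5 × OOSCDLoc) : Decidable (aux_r5 x y) := by unfold aux_r5; infer_instance

def aux_conn5 : (Fin 5 × OOSCDLoc) → (Fin 5 × OOSCDLoc) → Prop := fun x y =>
  aux_r5 x y ∨ aux_r5 y x

instance (x y : Fin 5 × OOSCDLoc) : Decidable (aux_conn5 x y) := by unfold aux_conn5; infer_instance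

abbrev aux_sys5 : System (ooSCD false) :=
  { ι := Fin 5
    instFin := inferInstance
    conn := aux_conn5
    conn_symm := fun _ _ h => Or.symm h }

instance (x : aux_sys5.ι × (ooSCD false).Loc) (y : aux_sys5.ι × (ooSCD false).Loc) : Decidable (aux_sys5.conn x y) :=
  (inferInstance : ∀ x y : Fin 5 × OOSCDLoc, Decidable (aux_conn5 x y)) x y

instance (x : aux_sys5.ι × (ooSCD false).Loc) (y : Fin 5 × OOSCDLoc) : Decidable (aux_sys5.conn x y) :=
  (inferInstance : ∀ x y : Fin 5 × OOSCDLoc, Decidable (aux_conn5 x y)) x y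

instance (x : Fin 5 × OOSCDLoc) (y : aux_sys5.ι × (ooSCD false).Loc) : Decidable (aux_sys5.conn x y) :=
  (inferInstance : ∀ x y : Fin 5 × OOSCDLoc, Decidable (aux_conn5 x y)) x y

instance (x : Fin 5 × OOSCDLoc) (y : Fin 5 × OOSCDLoc) : Decidable (aux_sys5.conn x y) :=
  (inferInstance : ∀ x y : Fin 5 × OOSCDLoc, Decidable (aux_conn5 x y)) x y

instance : Fintype aux_sys5.ι := inferInstanceAs (Fintype (Fin 5))

instance : DecidableEq aux_sys5.ι := inferInstanceAs (DecidableEq (Fin 5))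

def aux_ext5 : OOSCDLoc → Fin 5 × OOSCDLoc := fun a =>
  match a with
  | .O => (2, O)
  | .T0 => (0, T0)
  | .T1 => (4, T1)

def aux_enc5 : Bool → Fin 5 → Bool := fun s => ![false, false, s, false, false]

def aux_Inv5 : Bool → OOSCDLoc → ((Fin 5 → Bool) × (Fin 5 × OOSCDLoc)) → Prop :=
  fun s a c =>
  (a = OOSCDLoc.O ∧ c.2 = (2, O) ∧ c.1 0 = false ∧ c.1 1 = false ∧
    (c.1 2 = s ∨ c.1 2 = true) ∧ c.1 3 = false ∧ c.1 4 = false) ∨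
  (a = OOSCDLoc.T0 ∧
     (((c.2 = (0, T0) ∨ c.2 = (0, O)) ∧
        c.1 1 = false ∧ c.1 2 = s ∧ c.1 3 = false ∧ c.1 4 = false) ∨
      ((c.2 = (0, T1) ∨ c.2 = (1, O) ∨ c.2 = (1, T0)) ∧
        c.1 0 = false ∧ c.1 2 = s ∧ c.1 3 = false ∧ c.1 4 = false) ∨
      ((c.2 = (1, T1) ∨ c.2 = (2, T0)) ∧
        c.1 0 = false ∧ c.1 1 = false ∧ c.1 2 = s ∧ c.1 3 = false ∧ c.1 4 = false) ∨
      (s = true ∧ (c.2 = (2, T1) ∨ c.2 = (3, O) ∨ c.2 = (3, T0)) ∧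
        c.1 0 = false ∧ c.1 1 = false ∧ c.1 2 = false ∧ c.1 4 = false) ∨
      (s = true ∧ (c.2 = (3, T1) ∨ c.2 = (4, O) ∨ c.2 = (4, T0)) ∧
        c.1 0 = false ∧ c.1 1 = false ∧ c.1 2 = false ∧ c.1 3 = false) ∨
      (s = true ∧ c.2 = (4, T1) ∧ c.1 0 = false ∧ c.1 1 = false ∧ c.1 2 = false ∧
        c.1 3 = false ∧ c.1 4 = false))) ∨
  (a = OOSCDLoc.T1 ∧ c.2 = (4, T1) ∧ c.1 0 = false ∧ c.1 1 = false ∧ c.1 2 = s ∧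
    c.1 3 = false ∧ c.1 4 = false)

set_option synthInstance.maxSize 2000 in
set_option maxHeartbeats 1000000 in
instance (s : Bool) (a : OOSCDLoc) (c : (Fin 5 → Bool) × (Fin 5 × OOSCDLoc)) : Decidable (aux_Inv5 s a c) := by unfold aux_Inv5; infer_instance

lemma aux_inv5_trav : ∀ (s : Bool) (a : OOSCDLoc) (σ : Fin 5 → Bool) (i : Fin 5)
    (l : OOSCDLoc) (t : Bool) (l' : OOSCDLoc),
    aux_Inv5 s a (σ, (i, l)) → ooSCDTrav false (σ i, l) (t, l') →
    aux_Inv5 s a ((fun j => if j = i then t else σ j), (i, l')) := by decide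

lemma aux_inv5_move : ∀ (s : Bool) (a : OOSCDLoc) (σ : Fin 5 → Bool)
    (x y : Fin 5 × OOSCDLoc),
    aux_Inv5 s a (σ, x) → aux_conn5 x y → aux_Inv5 s a (σ, y) := by decide

lemma aux_inv5_closed (s : Bool) (a : OOSCDLoc) :
    ∀ c c', aux_Inv5 s a c → SysStep (ooSCD false) aux_sys5 c c' → aux_Inv5 s a c' := by
  rintro ⟨σ, x⟩ ⟨σ', y⟩ h hs
  match hs with
  | .trav ht =>
      erw [aux_updState_def (ι := Fin 5) (St := Bool)]
      exact aux_inv5_trav _ _ _ _ _ _ _ h ht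
  | .move hm => exact aux_inv5_move _ _ _ _ _ h hm

lemma aux_inv5_init : ∀ (s : Bool) (a : OOSCDLoc),
    aux_Inv5 s a (aux_enc5 s, aux_ext5 a) := by decide

def aux_Rt : (Bool × OOSCDLoc) → (Bool × OOSCDLoc) → Prop := fun x y =>
  x = y ∨ (x.2 = O ∧ y = (true, O)) ∨ (x.1 = true ∧ x.2 = T0 ∧ y = (false, T1))

instance (x y : Bool × OOSCDLoc) : Decidable (aux_Rt x y) := by unfold aux_Rt; infer_instance

lemma aux_inv5_ext : ∀ (s : Bool) (a : OOSCDLoc) (s' : Bool) (b : OOSCDLoc),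
    aux_Inv5 s a (aux_enc5 s', aux_ext5 b) → aux_Rt (s, a) (s', b) := by decide

lemma aux_rt_step : ∀ (x u v : Bool × OOSCDLoc),
    aux_Rt x u → ooSCDTrav true u v → aux_Rt x v := by decide

lemma aux_rt_char (x y : Bool × OOSCDLoc) :
    Relation.ReflTransGen (ooSCDTrav true) x y ↔ aux_Rt x y := by
  constructor
  · intro h
    exact aux_rtg_inv (fun u v hu huv => aux_rt_step x u v hu huv) h (Or.inl rfl)
  · rintro (rfl | ⟨h1, rfl⟩ | ⟨h1, h2, rfl⟩)
    · exact .refl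
    · exact .single (Or.inl ⟨h1, rfl⟩)
    · exact .single (Or.inr (Or.inl ⟨h1, h2, rfl⟩))

lemma aux_path5 :
    Relation.ReflTransGen (SysStep (ooSCD false) aux_sys5)
      (aux_enc5 true, ((0 : Fin 5), T0)) (aux_enc5 false, ((4 : Fin 5), T1)) := by
  refine .head (b := (aux_enc5 true, ((0 : Fin 5), O))) (SysStep.move (by decide)) ?_
  refine .head (b := (![true, false, true, false, false], ((0 : Fin 5), O)))
    (aux_stepTrav aux_sys5 true (show ooSCDTrav false _ _ by decide) (by intro j; fin_cases j <;> rfl)) ?_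
  refine .head (b := (![true, false, true, false, false], ((0 : Fin 5), T0)))
    (SysStep.move (by decide)) ?_
  refine .head (b := (aux_enc5 true, ((0 : Fin 5), T1)))
    (aux_stepTrav aux_sys5 false (show ooSCDTrav false _ _ by decide) (by intro j; fin_cases j <;> rfl)) ?_
  refine .head (b := (aux_enc5 true, ((1 : Fin 5), O))) (SysStep.move (by decide)) ?_
  refine .head (b := (![false, true, true, false, false], ((1 : Fin 5), O)))
    (aux_stepTrav aux_sys5 true (show ooSCDTrav false _ _ by decide) (by intro j; fin_cases j <;> rfl)) ?_
  refine .head (b := (![false, true, true, false, false], ((0 : Fin 5), T1)))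
    (SysStep.move (by decide)) ?_
  refine .head (b := (![false, true, true, false, false], ((1 : Fin 5), T0)))
    (SysStep.move (by decide)) ?_
  refine .head (b := (aux_enc5 true, ((1 : Fin 5), T1)))
    (aux_stepTrav aux_sys5 false (show ooSCDTrav false _ _ by decide) (by intro j; fin_cases j <;> rfl)) ?_
  refine .head (b := (aux_enc5 true, ((2 : Fin 5), T0))) (SysStep.move (by decide)) ?_
  refine .head (b := (aux_enc5 false, ((2 : Fin 5), T1)))
    (aux_stepTrav aux_sys5 false (show ooSCDTrav false _ _ by decide) (by intro j; fin_cases j <;> rfl)) ?_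
  refine .head (b := (aux_enc5 false, ((3 : Fin 5), O))) (SysStep.move (by decide)) ?_
  refine .head (b := (![false, false, false, true, false], ((3 : Fin 5), O)))
    (aux_stepTrav aux_sys5 true (show ooSCDTrav false _ _ by decide) (by intro j; fin_cases j <;> rfl)) ?_
  refine .head (b := (![false, false, false, true, false], ((2 : Fin 5), T1)))
    (SysStep.move (by decide)) ?_
  refine .head (b := (![false, false, false, true, false], ((3 : Fin 5), T0)))
    (SysStep.move (by decide)) ?_
  refine .head (b := (aux_enc5 false, ((3 : Fin 5), T1)))
    (aux_stepTrav aux_sys5 false (show ooSCDTrav false _ _ by decide) (by intro j; fin_cases j <;> rfl)) ?_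
  refine .head (b := (aux_enc5 false, ((4 : Fin 5), O))) (SysStep.move (by decide)) ?_
  refine .head (b := (![false, false, false, false, true], ((4 : Fin 5), O)))
    (aux_stepTrav aux_sys5 true (show ooSCDTrav false _ _ by decide) (by intro j; fin_cases j <;> rfl)) ?_
  refine .head (b := (![false, false, false, false, true], ((3 : Fin 5), T1)))
    (SysStep.move (by decide)) ?_
  refine .head (b := (![false, false, false, false, true], ((4 : Fin 5), T0)))
    (SysStep.move (by decide)) ?_
  refine .head (b := (aux_enc5 false, ((4 : Fin 5), T1)))
    (aux_stepTrav aux_sys5 false (show ooSCDTrav false _ _ by decide) (by intro j; fin_cases j <;> rfl)) ?_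
  exact .refl

lemma aux_sim_oo : Simulates (ooSCD false) (ooSCD true) := by
  refine ⟨aux_sys5, aux_ext5, aux_enc5, ?_, ?_, ?_⟩
  · intro a b h
    have h' : (aux_ext5 a : Fin 5 × OOSCDLoc) = aux_ext5 b := h
    clear h
    cases a <;> cases b <;> first | rfl | exact absurd h' (by decide)
  · intro a b h
    have h' : (aux_enc5 a : Fin 5 → Bool) = aux_enc5 b := h
    have h2 := congrFun h' 2
    clear h h'
    cases a <;> cases b <;> first | rfl | exact absurd h2 (by decide)
  · intro s s' a b
    constructor
    · intro h
      have hI := aux_rtg_inv (aux_inv5_closed s a) h (aux_inv5_init s a)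
      exact (aux_rt_char _ _).mpr (aux_inv5_ext s a s' b hI)
    · intro h
      rcases (aux_rt_char _ _).mp h with heq | ⟨h1, heq⟩ | ⟨h1, h2, heq⟩
      · injection heq with e1 e2
        subst e1; subst e2
        exact .refl
      · have h1' : a = OOSCDLoc.O := h1
        injection heq with e1 e2
        subst h1'; subst e1; subst e2
        refine Relation.ReflTransGen.single (aux_stepTrav aux_sys5 true ?_ ?_)
        · exact Or.inl ⟨rfl, rfl⟩
        · cases s <;> intro j <;> fin_cases j <;> rfl
      · have h1' : s = true := h1
        have h2' : a = OOSCDLoc.T0 := h2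
        injection heq with e1 e2
        subst h1'; subst h2'; subst e1; subst e2
        exact aux_path5

end Aux7

/-- The undirected open-optional normal self-closing door can simulate
a diode (two copies wired in series), and hence can simulate the directed open-optional
normal self-closing door. -/
theorem undirected_ooSCD_simulates_directed_ooSCD :
    Simulates (ooSCD false) diode ∧ Simulates (ooSCD false) (ooSCD true) := by
  exact ⟨aux_sim_diode, aux_sim_oo⟩
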